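/- For the resonant Hamiltonian H = εI + AI² + BI^{n/2}cos(nφ) with n > 3 and ε ≠ 0, the zeroth-order twist at the origin equals 2A, independent of B; in terms of the residue computation, Res_{z=0} (−P(z))/R(z)^{3/2} with R(z) = B²zⁿ − (εz + Az²)² and P(z) = εz + Az² yields τ₀ = 2A. -/

import Mathlib

open Complex

/-- For the resonant Hamiltonian `H = εI + AI² + BI^{n/2}cos(nφ)` with `n > 3` and
`ε ≠ 0`: with `R(z) = B²zⁿ - (εz + Az²)²` and `z·u(z)` the branch of `√R` with
`u 0 = iε`, the residue of `-P(z)/R(z)^{3/2}` at `z = 0` yields the zeroth-order twist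
`τ₀ = -ε³·J''(0) = 2A`, independent of `B`. -/
theorem stmt18 (n : ℕ) (hn : 3 < n) (A B ε : ℝ) (hε : ε ≠ 0) (u : ℂ → ℂ)
    (hu : AnalyticAt ℂ u 0) (hu0 : u 0 = I * ε)
    (hR : ∀ᶠ z in nhds (0:ℂ),
      (z * u z)^2 = (B:ℂ)^2 * z^n - ((ε:ℂ)*z + (A:ℂ)*z^2)^2) :
    -- residue of `-P/(z³u³)` at `z = 0` is `(1/2)·(d²/dz²)[-P/u³](0)`; `J''(0) = i·Res`
    (-(ε:ℂ)^3 * (I * ((1/2) *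
        iteratedDeriv 2 (fun z => -((ε:ℂ)*z + (A:ℂ)*z^2) / (u z)^3) 0))
      = ((2*A : ℝ) : ℂ)) := by
  have hεC : (ε:ℂ) ≠ 0 := by exact_mod_cast hε
  have hu0' : u 0 ≠ 0 := by rw [hu0]; simp [I_ne_zero, hεC]
  -- Step A: deriv u 0 = I * A
  have hw : AnalyticAt ℂ (fun z : ℂ => (B:ℂ)^2 * z^(n-2) - ((ε:ℂ) + (A:ℂ)*z)^2) 0 := by
    apply AnalyticAt.sub
    · exact analyticAt_const.mul ((analyticAt_id).pow _)
    · exact (analyticAt_const.add (analyticAt_const.mul analyticAt_id)).pow 2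
  have hv : AnalyticAt ℂ (fun z : ℂ => (u z)^2) 0 := hu.pow 2
  have heq : (fun z : ℂ => (u z)^2) =ᶠ[nhds 0]
      (fun z : ℂ => (B:ℂ)^2 * z^(n-2) - ((ε:ℂ) + (A:ℂ)*z)^2) := by
    apply (AnalyticAt.frequently_eq_iff_eventually_eq hv hw).mp
    apply Filter.Eventually.frequently
    filter_upwards [eventually_nhdsWithin_of_eventually_nhds hR, self_mem_nhdsWithin]
      with z hz hz0
    have hz2 : (z:ℂ)^2 ≠ 0 := pow_ne_zero _ hz0
    apply mul_left_cancel₀ hz2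
    have hzn : z^n = z^(n-2) * z^2 := by rw [← pow_add]; congr 1; omega
    calc z^2 * (u z)^2 = (z * u z)^2 := by ring
      _ = (B:ℂ)^2 * z^n - ((ε:ℂ)*z + (A:ℂ)*z^2)^2 := hz
      _ = z^2 * ((B:ℂ)^2 * z^(n-2) - ((ε:ℂ) + (A:ℂ)*z)^2) := by rw [hzn]; ring
  have hu1 : deriv u 0 = I * A := by
    have h1 : HasDerivAt (fun z : ℂ => (u z)^2)
        ((2:ℕ) * (u 0)^(2-1) * deriv u 0) 0 :=
      (hu.differentiableAt.hasDerivAt).pow 2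
    have h2 : HasDerivAt (fun z : ℂ => (B:ℂ)^2 * z^(n-2))
        ((B:ℂ)^2 * ((n-2 : ℕ) * (0:ℂ)^(n-2-1))) 0 := (hasDerivAt_pow (n-2) 0).const_mul _
    have h3 : HasDerivAt (fun z : ℂ => ((ε:ℂ) + (A:ℂ)*z)^2)
        ((2:ℕ) * ((ε:ℂ) + (A:ℂ)*(0:ℂ))^(2-1) * ((A:ℂ)*1)) 0 := by
      exact (((hasDerivAt_id (0:ℂ)).const_mul (A:ℂ)).const_add (ε:ℂ)).pow 2
    have hd : deriv (fun z : ℂ => (u z)^2) 0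
        = deriv (fun z : ℂ => (B:ℂ)^2 * z^(n-2) - ((ε:ℂ) + (A:ℂ)*z)^2) 0 :=
      heq.deriv_eq
    rw [h1.deriv, (show HasDerivAt (fun z : ℂ => (B:ℂ)^2 * z^(n-2) - ((ε:ℂ) + (A:ℂ)*z)^2) _ 0 from h2.sub h3).deriv] at hd
    have hzp : (0:ℂ)^(n-2-1) = 0 := by
      apply zero_pow; omega
    rw [hzp, hu0] at hd
    -- hd : 2 * (I*ε)^1 * deriv u 0 = B^2 * ((n-2) * 0) - 2 * (ε + A*0)^1 * (A*1)
    have h2Iε : (2:ℂ) * (I*ε) ≠ 0 := by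
      simp [I_ne_zero, hεC]
    apply mul_left_cancel₀ h2Iε
    have : (2:ℂ) * (I*ε) * (I*A) = -(2*ε*A) := by
      have := Complex.I_mul_I
      calc (2:ℂ) * (I*ε) * (I*A) = (I*I) * (2*ε*A) := by ring
        _ = -(2*ε*A) := by rw [Complex.I_mul_I]; ring
    rw [this]
    rw [show ((2:ℕ):ℂ) * (I*↑ε)^(2-1) * deriv u 0 = 2*(I*↑ε)*deriv u 0 by push_cast; ring] at hd
    rw [hd]; push_cast; ring
  -- Step B: a formula for deriv g near 0
  set g : ℂ → ℂ := fun z => -((ε:ℂ)*z + (A:ℂ)*z^2) / (u z)^3 with hg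
  set F : ℂ → ℂ := fun z =>
      ((-((ε:ℂ) + 2*(A:ℂ)*z)) * (u z)^3
        - (-((ε:ℂ)*z + (A:ℂ)*z^2)) * ((3:ℕ) * (u z)^(3-1) * deriv u z)) / ((u z)^3)^2
    with hF
  have hgF : deriv g =ᶠ[nhds 0] F := by
    filter_upwards [hu.eventually_analyticAt, hu.continuousAt.eventually_ne hu0']
      with z hz hz0
    have hP : HasDerivAt (fun z : ℂ => -((ε:ℂ)*z + (A:ℂ)*z^2)) (-((ε:ℂ) + 2*(A:ℂ)*z)) z := by
      have h1 : HasDerivAt (fun z : ℂ => (ε:ℂ)*z + (A:ℂ)*z^2)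
          ((ε:ℂ)*1 + (A:ℂ)*((2:ℕ)*z^(2-1))) z :=
        (((hasDerivAt_id z).const_mul (ε:ℂ))).add ((hasDerivAt_pow 2 z).const_mul (A:ℂ))
      have : HasDerivAt (fun z : ℂ => -((ε:ℂ)*z + (A:ℂ)*z^2)) _ _ := h1.neg
      convert this using 1
      push_cast; ring
    have hu' : HasDerivAt u (deriv u z) z := hz.differentiableAt.hasDerivAt
    have hu3 : HasDerivAt (fun z => (u z)^3) ((3:ℕ) * (u z)^(3-1) * deriv u z) z := hu'.pow 3
    have h3 : (u z)^3 ≠ 0 := pow_ne_zero _ hz0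
    exact (hP.div hu3 h3).deriv
  -- Step C: iteratedDeriv 2 g 0 = deriv F 0
  have hit : iteratedDeriv 2 g 0 = deriv F 0 := by
    rw [show (2:ℕ) = 1 + 1 from rfl, iteratedDeriv_succ, iteratedDeriv_one]
    exact hgF.deriv_eq
  -- Step D: compute deriv F 0
  have hdF : deriv F 0 = 4 * I * A / (ε:ℂ)^3 := by
    have hu' : HasDerivAt u (deriv u 0) 0 := hu.differentiableAt.hasDerivAt
    have hdu : AnalyticAt ℂ (deriv u) 0 := by
      have h1 : AnalyticAt ℂ (fun z => fderiv ℂ u z 1) 0 :=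
        ((ContinuousLinearMap.apply ℂ ℂ (1:ℂ)).analyticAt _).comp hu.fderiv
      simpa [Function.comp_def, fderiv_apply_one_eq_deriv] using h1
    have hu3 : HasDerivAt (fun z => (u z)^3) ((3:ℕ) * (u 0)^(3-1) * deriv u 0) 0 := hu'.pow 3
    -- numerator
    have hf1 : HasDerivAt (fun z : ℂ => -((ε:ℂ) + 2*(A:ℂ)*z)) (-(2*(A:ℂ))) 0 := by
      have : HasDerivAt (fun z : ℂ => -((ε:ℂ) + 2*(A:ℂ)*z)) _ 0 := (((hasDerivAt_id (0:ℂ)).const_mul (2*(A:ℂ))).const_add (ε:ℂ)).neg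
      convert this using 1; ring
    have hN1 : HasDerivAt (fun z : ℂ => (-((ε:ℂ) + 2*(A:ℂ)*z)) * (u z)^3)
        ((-(2*(A:ℂ))) * (u 0)^3
          + (-((ε:ℂ) + 2*(A:ℂ)*0)) * ((3:ℕ) * (u 0)^(3-1) * deriv u 0)) 0 :=
      hf1.mul hu3
    have hf2 : HasDerivAt (fun z : ℂ => -((ε:ℂ)*z + (A:ℂ)*z^2)) (-((ε:ℂ) + 2*(A:ℂ)*0)) 0 := by
      have h1 : HasDerivAt (fun z : ℂ => (ε:ℂ)*z + (A:ℂ)*z^2)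
          ((ε:ℂ)*1 + (A:ℂ)*((2:ℕ)*(0:ℂ)^(2-1))) 0 :=
        (((hasDerivAt_id (0:ℂ)).const_mul (ε:ℂ))).add ((hasDerivAt_pow 2 0).const_mul (A:ℂ))
      have : HasDerivAt (fun z : ℂ => -((ε:ℂ)*z + (A:ℂ)*z^2)) _ _ := h1.neg
      convert this using 1
      push_cast; ring
    have hg2 : HasDerivAt (fun z : ℂ => (3:ℕ) * (u z)^(3-1) * deriv u z)
        (deriv (fun z : ℂ => (3:ℕ) * (u z)^(3-1) * deriv u z) 0) 0 := by
      have : DifferentiableAt ℂ (fun z : ℂ => (3:ℕ) * (u z)^(3-1) * deriv u z) 0 := by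
        exact ((differentiableAt_const _).mul
          (hu.differentiableAt.pow _)).mul hdu.differentiableAt
      exact this.hasDerivAt
    have hN2 : HasDerivAt
        (fun z : ℂ => (-((ε:ℂ)*z + (A:ℂ)*z^2)) * ((3:ℕ) * (u z)^(3-1) * deriv u z))
        ((-((ε:ℂ) + 2*(A:ℂ)*0)) * ((3:ℕ) * (u 0)^(3-1) * deriv u 0)
          + (-((ε:ℂ)*0 + (A:ℂ)*0^2))
            * deriv (fun z : ℂ => (3:ℕ) * (u z)^(3-1) * deriv u z) 0) 0 :=
      hf2.mul hg2
    have hN : HasDerivAt (fun z : ℂ =>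
        (-((ε:ℂ) + 2*(A:ℂ)*z)) * (u z)^3
          - (-((ε:ℂ)*z + (A:ℂ)*z^2)) * ((3:ℕ) * (u z)^(3-1) * deriv u z))
        ((-(2*(A:ℂ))) * (u 0)^3) 0 := by
      have : HasDerivAt (fun z : ℂ =>
          (-((ε:ℂ) + 2*(A:ℂ)*z)) * (u z)^3
            - (-((ε:ℂ)*z + (A:ℂ)*z^2)) * ((3:ℕ) * (u z)^(3-1) * deriv u z)) _ 0 := hN1.sub hN2
      convert this using 1
      ring
    have hD : HasDerivAt (fun z : ℂ => ((u z)^3)^2)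
        ((2:ℕ) * ((u 0)^3)^(2-1) * ((3:ℕ) * (u 0)^(3-1) * deriv u 0)) 0 := hu3.pow 2
    have h3 : ((u 0)^3)^2 ≠ 0 := pow_ne_zero _ (pow_ne_zero _ hu0')
    have hdf := (show HasDerivAt (fun z : ℂ => ((-((ε:ℂ) + 2*(A:ℂ)*z)) * (u z)^3
          - (-((ε:ℂ)*z + (A:ℂ)*z^2)) * ((3:ℕ) * (u z)^(3-1) * deriv u z)) / ((u z)^3)^2) _ 0
      from hN.div hD h3).deriv
    rw [hF] at *
    rw [hdf, hu0, hu1]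
    have hI := Complex.I_mul_I
    field_simp
    ring_nf
    rw [show (I:ℂ)^11 = I^7 by rw [show (11:ℕ)=7+4 from rfl, pow_add, Complex.I_pow_four, mul_one]]
  rw [hit, hdF]
  have hI := Complex.I_mul_I
  field_simp
  ring_nf
  rw [Complex.I_sq]
  push_cast; ring
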